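/- Let f : 𝔸 → 𝔸 be a C⁰-integrable C¹ symplectic twist diffeomorphism of the annulus 𝔸 = 𝕋 × ℝ, i.e., f preserves a continuous foliation of 𝔸 into graphs of continuous functions η_c : 𝕋 → ℝ with each leaf invariant. Then for every n > 0, the iterate fⁿ is also a symplectic twist diffeomorphism (in particular fⁿ satisfies the twist condition). -/

import Mathlib

open Filter Function

/-- A symplectic twist diffeomorphism of the annulus `𝔸 = 𝕋 × ℝ`, described through a lift
`F : ℝ² → ℝ²`: a `C¹` diffeomorphism, equivariant under the deck transformation
(this encodes being a lift of an annulus diffeomorphism isotopic to the identity),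
symplectic (Jacobian determinant `1`, preserving `dθ ∧ dr` and orientation), and satisfying
the twist condition: for each `x`, `r ↦ F₁(x, r)` is an increasing homeomorphism onto `ℝ`
(it is automatically `C¹`). -/
structure TwistLift where
  F : ℝ × ℝ → ℝ × ℝ
  contDiff : ContDiff ℝ 1 F
  inv : ℝ × ℝ → ℝ × ℝ
  left_inv : Function.LeftInverse inv F
  right_inv : Function.RightInverse inv F
  inv_contDiff : ContDiff ℝ 1 inv
  equivariant : ∀ x r, F (x + 1, r) = ((F (x, r)).1 + 1, (F (x, r)).2)
  symplectic : ∀ p, LinearMap.det ((fderiv ℝ F p).toLinearMap) = 1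
  twist_mono : ∀ x, StrictMono fun r => (F (x, r)).1
  twist_surj : ∀ x, Function.Surjective fun r => (F (x, r)).1

/-- `C⁰`-integrability: `η c` is the leaf of average `c` (a continuous graph, expressed via
its periodic lift), the leaves form a continuous foliation of the annulus
(`c ↦ η c θ` is an increasing homeomorphism of `ℝ` for each `θ`, jointly continuous),
and each leaf is invariant: `F` maps the graph of `η c` into itself. -/
def TwistLift.C0Integrable (T : TwistLift) (η : ℝ → ℝ → ℝ) : Prop :=
  Continuous (fun p : ℝ × ℝ => η p.2 p.1) ∧
  (∀ c θ, η c (θ + 1) = η c θ) ∧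
  (∀ θ, StrictMono fun c => η c θ) ∧
  (∀ θ, Function.Surjective fun c => η c θ) ∧
  (∀ c θ, (T.F (θ, η c θ)).2 = η c ((T.F (θ, η c θ)).1))


/-- First coordinate of the `m`-th iterate of `T.F` starting on the leaf of `η c`. -/
def auxX (T : TwistLift) (η : ℝ → ℝ → ℝ) (m : ℕ) (c θ : ℝ) : ℝ :=
  (T.F^[m] (θ, η c θ)).1

theorem stmt6 (T : TwistLift) (η : ℝ → ℝ → ℝ) (hint : T.C0Integrable η)
    (n : ℕ) (hn : 0 < n) :
    ∃ T' : TwistLift, T'.F = T.F^[n] := by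
  obtain ⟨hcont, hper, hmono, hsurj, hinv⟩ := hint
  obtain ⟨N, rfl⟩ := Nat.exists_eq_succ_of_ne_zero hn.ne'
  set n := N + 1 with hn'
  have hFc : Continuous T.F := T.contDiff.continuous
  have hFinj : Function.Injective T.F := T.left_inv.injective
  have hηc : ∀ c, Continuous fun θ => η c θ :=
    fun c => hcont.comp (continuous_id.prodMk continuous_const)
  have hηθ : ∀ θ, Continuous fun c => η c θ :=
    fun θ => hcont.comp (continuous_const.prodMk continuous_id)
  -- iterated leaf invariance
  have key : ∀ m c θ, (T.F^[m] (θ, η c θ)).2 = η c ((T.F^[m] (θ, η c θ)).1) := by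
    intro m
    induction m with
    | zero => intro c θ; simp
    | succ m ih =>
      intro c θ
      have hq : T.F^[m] (θ, η c θ)
          = ((T.F^[m] (θ, η c θ)).1, η c ((T.F^[m] (θ, η c θ)).1)) := by
        rw [← ih c θ]
      rw [Function.iterate_succ_apply', hq]
      exact hinv c _
  have pair : ∀ m c θ, T.F^[m] (θ, η c θ) = (auxX T η m c θ, η c (auxX T η m c θ)) :=
    fun m c θ => Prod.ext rfl (key m c θ)
  have step : ∀ m c θ, auxX T η (m + 1) c θ = auxX T η 1 c (auxX T η m c θ) := by
    intro m c θ
    show (T.F^[m+1] (θ, η c θ)).1 = _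
    rw [Function.iterate_succ_apply', pair m c θ]
    simp [auxX]
  -- iterated equivariance
  have equiv : ∀ m x r, T.F^[m] (x + 1, r) = ((T.F^[m] (x, r)).1 + 1, (T.F^[m] (x, r)).2) := by
    intro m
    induction m with
    | zero => intro x r; simp
    | succ m ih =>
      intro x r
      rw [Function.iterate_succ_apply, Function.iterate_succ_apply, T.equivariant, ih]
  have Xequi : ∀ m c θ, auxX T η m c (θ + 1) = auxX T η m c θ + 1 := by
    intro m c θ
    show (T.F^[m] (θ + 1, η c (θ + 1))).1 = (T.F^[m] (θ, η c θ)).1 + 1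
    rw [hper c θ, equiv m θ (η c θ)]
  -- monotonicity of the projected dynamics in θ
  have ginj : ∀ c, Function.Injective fun θ => auxX T η 1 c θ := by
    intro c θ θ' h
    simp only at h
    have h2 : T.F^[1] (θ, η c θ) = T.F^[1] (θ', η c θ') := by
      rw [pair 1 c θ, pair 1 c θ', h]
    have h3 : (θ, η c θ) = (θ', η c θ') := hFinj (by simpa using h2)
    exact congrArg Prod.fst h3
  have gcont : ∀ c, Continuous fun θ => auxX T η 1 c θ := by
    intro c
    have : Continuous fun θ : ℝ => (T.F (θ, η c θ)).1 :=
      continuous_fst.comp (hFc.comp (continuous_id.prodMk (hηc c)))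
    simpa [auxX] using this
  have Xcont : ∀ m θ, Continuous fun c => auxX T η m c θ := by
    intro m θ
    have : Continuous fun c : ℝ => (T.F^[m] (θ, η c θ)).1 :=
      continuous_fst.comp ((hFc.iterate m).comp (continuous_const.prodMk (hηθ θ)))
    simpa [auxX] using this
  have gmono : ∀ c, StrictMono fun θ => auxX T η 1 c θ := by
    intro c
    rcases (gcont c).strictMono_of_inj (ginj c) with h | h
    · exact h
    · exfalso
      have h1 : auxX T η 1 c (0 + 1) < auxX T η 1 c 0 := h (by norm_num)
      rw [Xequi] at h1
      linarith
  have Xmonoθ : ∀ m c, StrictMono fun θ => auxX T η m c θ := by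
    intro m
    induction m with
    | zero =>
      intro c
      have : StrictMono fun θ : ℝ => θ := fun a b h => h
      simpa [auxX] using this
    | succ m ih =>
      intro c
      have h1 : StrictMono fun θ => auxX T η 1 c (auxX T η m c θ) := (gmono c).comp (ih c)
      have e : (fun θ => auxX T η (m + 1) c θ) = fun θ => auxX T η 1 c (auxX T η m c θ) :=
        funext fun θ => step m c θ
      rw [e]
      exact h1
  -- monotonicity in c
  have g_le : ∀ θ (c c' : ℝ), c ≤ c' → auxX T η 1 c θ ≤ auxX T η 1 c' θ := by
    intro θ c c' h
    have h2 : η c θ ≤ η c' θ := (hmono θ).monotone h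
    simpa [auxX] using (T.twist_mono θ).monotone h2
  have g_lt : ∀ θ (c c' : ℝ), c < c' → auxX T η 1 c θ < auxX T η 1 c' θ := by
    intro θ c c' h
    have h2 : η c θ < η c' θ := hmono θ h
    simpa [auxX] using T.twist_mono θ h2
  have Xmonoc_le : ∀ m θ, Monotone fun c => auxX T η m c θ := by
    intro m
    induction m with
    | zero => intro θ c c' _; simp [auxX]
    | succ m ih =>
      intro θ c c' hcc
      simp only []
      rw [step m c θ, step m c' θ]
      calc auxX T η 1 c (auxX T η m c θ) ≤ auxX T η 1 c (auxX T η m c' θ) :=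
            (gmono c).monotone (ih θ hcc)
        _ ≤ auxX T η 1 c' (auxX T η m c' θ) := g_le _ _ _ hcc
  have Xmonoc : ∀ m θ (c c' : ℝ), c < c' → auxX T η (m + 1) c θ < auxX T η (m + 1) c' θ := by
    intro m θ c c' h
    rw [step m c θ, step m c' θ]
    calc auxX T η 1 c (auxX T η m c θ) ≤ auxX T η 1 c (auxX T η m c' θ) :=
          (gmono c).monotone (Xmonoc_le m θ h.le)
      _ < auxX T η 1 c' (auxX T η m c' θ) := g_lt _ _ _ h
  -- surjectivity in c
  have ηtop : ∀ θ, Tendsto (fun c => η c θ) atTop atTop :=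
    fun θ => tendsto_atTop_atTop_of_monotone (hmono θ).monotone
      (fun b => (hsurj θ b).imp fun _ hc => hc.ge)
  have ηbot : ∀ θ, Tendsto (fun c => η c θ) atBot atBot :=
    fun θ => tendsto_atBot_atBot_of_monotone (hmono θ).monotone
      (fun b => (hsurj θ b).imp fun _ hc => hc.le)
  have Ftop : ∀ θ, Tendsto (fun r => (T.F (θ, r)).1) atTop atTop :=
    fun θ => tendsto_atTop_atTop_of_monotone (T.twist_mono θ).monotone
      (fun b => (T.twist_surj θ b).imp fun _ hc => hc.ge)
  have Fbot : ∀ θ, Tendsto (fun r => (T.F (θ, r)).1) atBot atBot :=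
    fun θ => tendsto_atBot_atBot_of_monotone (T.twist_mono θ).monotone
      (fun b => (T.twist_surj θ b).imp fun _ hc => hc.le)
  have gtop : ∀ θ, Tendsto (fun c => auxX T η 1 c θ) atTop atTop := by
    intro θ
    have := (Ftop θ).comp (ηtop θ)
    simpa [auxX, Function.comp_def] using this
  have gbot : ∀ θ, Tendsto (fun c => auxX T η 1 c θ) atBot atBot := by
    intro θ
    have := (Fbot θ).comp (ηbot θ)
    simpa [auxX, Function.comp_def] using this
  have Xtop : ∀ m θ, Tendsto (fun c => auxX T η (m + 1) c θ) atTop atTop := by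
    intro m
    induction m with
    | zero => exact gtop
    | succ m ih =>
      intro θ
      refine tendsto_atTop_mono' atTop ?_ (gtop (auxX T η (m + 1) 0 θ))
      filter_upwards [eventually_ge_atTop (0 : ℝ)] with c hc
      rw [step (m + 1) c θ]
      exact (gmono c).monotone (Xmonoc_le (m + 1) θ hc)
  have Xbot : ∀ m θ, Tendsto (fun c => auxX T η (m + 1) c θ) atBot atBot := by
    intro m
    induction m with
    | zero => exact gbot
    | succ m ih =>
      intro θ
      refine tendsto_atBot_mono' atBot ?_ (gbot (auxX T η (m + 1) 0 θ))
      filter_upwards [eventually_le_atBot (0 : ℝ)] with c hc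
      rw [step (m + 1) c θ]
      exact (gmono c).monotone (Xmonoc_le (m + 1) θ hc)
  have Xsurj : ∀ θ, Function.Surjective fun c => auxX T η n c θ :=
    fun θ => (Xcont n θ).surjective (Xtop N θ) (Xbot N θ)
  -- smoothness and symplecticity of iterates
  have hCD : ∀ m, ContDiff ℝ 1 (T.F^[m]) := by
    intro m
    induction m with
    | zero => simpa using contDiff_id
    | succ m ih =>
      rw [Function.iterate_succ']
      exact T.contDiff.comp ih
  have hsymp : ∀ m p, LinearMap.det ((fderiv ℝ (T.F^[m]) p).toLinearMap) = 1 := by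
    intro m
    induction m with
    | zero =>
      intro p
      simp [Function.iterate_zero, fderiv_id]
    | succ m ih =>
      intro p
      rw [Function.iterate_succ',
        fderiv_comp p (T.contDiff.differentiable one_ne_zero _) ((hCD m).differentiable one_ne_zero _),
        ContinuousLinearMap.toLinearMap_comp, LinearMap.det_comp, ih p, T.symplectic, one_mul]
  refine ⟨⟨T.F^[n], hCD n, T.inv^[n], T.left_inv.iterate n, T.right_inv.iterate n,
    ?_, equiv n, hsymp n, ?_, ?_⟩, rfl⟩
  · -- inverse is C¹
    clear hn
    induction n with
    | zero => simpa using contDiff_id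
    | succ m ih =>
      rw [Function.iterate_succ']
      exact T.inv_contDiff.comp ih
  · -- twist condition: monotone
    intro x r r' hrr'
    obtain ⟨c, hc⟩ := hsurj x r
    obtain ⟨c', hc'⟩ := hsurj x r'
    have hc2 : η c x = r := hc
    have hc2' : η c' x = r' := hc'
    have hcc : c < c' := (hmono x).lt_iff_lt.mp (by rw [hc2, hc2']; exact hrr')
    show (T.F^[n] (x, r)).1 < (T.F^[n] (x, r')).1
    rw [← hc2, ← hc2']
    exact Xmonoc N x c c' hcc
  · -- twist condition: surjective
    intro x y
    obtain ⟨c, hcy⟩ := Xsurj x y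
    exact ⟨η c x, hcy⟩
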